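/- arXiv:1504.01067 — 2 statements merged into one kernel-verified Lean document; each statement's English description precedes it below -/
import Mathlib

section
/- Let V be a 2n-dimensional symplectic space over a finite field F_q of odd order, and let X, Y, Z be maximal totally isotropic subspaces that are pairwise 'adjacent', i.e. each pairwise intersection has codimension 1 in each of them. If X, Y, Z are pairwise distinct and W is a fourth maximal totally isotropic subspace adjacent to both Y and Z, then W cannot be at distance ≥ 2 from X; equivalently, the diamond graph (4 vertices X,Y,Z,W with all pairs adjacent except X,W) is not an induced subgraph of the dual polar graph. Concretely: if X,Y,Z are pairwise adjacent generators and W is a generator adjacent to Y and to Z, then dim(X ∩ W) ≥ n−1. -/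
open Module

/-- The triangle lemma: three pairwise adjacent generators share a common codim-1 subspace. -/
theorem aux_triangle
    {F : Type*} [Field F]
    {V : Type*} [AddCommGroup V] [Module F V] [FiniteDimensional F V]
    (n : ℕ) (hn : 1 ≤ n)
    (B : LinearMap.BilinForm F V) (hrefl : B.IsRefl) (hnd : B.Nondegenerate)
    (X Y Z : Submodule F V)
    (hX : B.orthogonal X = X) (hY : B.orthogonal Y = Y) (hZ : B.orthogonal Z = Z)
    (hdX : finrank F X = n) (hdY : finrank F Y = n) (hdZ : finrank F Z = n)
    (hadjXY : finrank F ↥(Y ⊓ X) = n - 1)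
    (hadjXZ : finrank F ↥(Y ⊓ Z) = n - 1)
    (hadjYZ : finrank F ↥(X ⊓ Z) = n - 1) :
    Y ⊓ X = Y ⊓ Z := by
  by_contra h
  -- Y ⊓ X and Y ⊓ Z are distinct codim-1 subspaces of Y, so their sup is Y
  have hne : ¬ (Y ⊓ X ≤ Y ⊓ Z) := by
    intro hle
    exact h (Submodule.eq_of_le_of_finrank_le hle (by rw [hadjXY, hadjXZ]))
  have hlt : Y ⊓ Z < (Y ⊓ X) ⊔ (Y ⊓ Z) := by
    refine lt_of_le_of_ne le_sup_right ?_
    intro heq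
    exact hne (heq ▸ le_sup_left)
  have hfin1 : finrank F ↥((Y ⊓ X) ⊔ (Y ⊓ Z)) = n := by
    have h1 : finrank F ↥(Y ⊓ Z) < finrank F ↥((Y ⊓ X) ⊔ (Y ⊓ Z)) :=
      Submodule.finrank_lt_finrank_of_lt hlt
    have h2 : ((Y ⊓ X) ⊔ (Y ⊓ Z)) ≤ Y := sup_le inf_le_left inf_le_left
    have h3 : finrank F ↥((Y ⊓ X) ⊔ (Y ⊓ Z)) ≤ finrank F Y :=
      Submodule.finrank_mono h2
    omega
  have hYsup : Y = (Y ⊓ X) ⊔ (Y ⊓ Z) :=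
    (Submodule.eq_of_le_of_finrank_le (sup_le inf_le_left inf_le_left)
      (by rw [hfin1, hdY])).symm
  have hYXZ : Y ≤ X ⊔ Z := by
    rw [hYsup]; exact sup_le (inf_le_right.trans le_sup_left) (inf_le_right.trans le_sup_right)
  -- then X ⊓ Z ≤ orthogonal (X ⊔ Z) ≤ orthogonal Y = Y
  have hsub : X ⊓ Z ≤ B.orthogonal (X ⊔ Z) := by
    rintro v ⟨hvX, hvZ⟩
    intro u hu
    obtain ⟨x, hx, z, hz, rfl⟩ := Submodule.mem_sup.mp hu
    have h1 : B x v = 0 := by rw [← hX] at hvX; exact hvX x hx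
    have h2 : B z v = 0 := by rw [← hZ] at hvZ; exact hvZ z hz
    show B (x + z) v = 0
    rw [map_add, LinearMap.add_apply, h1, h2, add_zero]
  have hXZY : X ⊓ Z ≤ Y := hsub.trans ((B.orthogonal_le hYXZ).trans hY.le)
  have e1 : X ⊓ Z = Y ⊓ X :=
    Submodule.eq_of_le_of_finrank_le (le_inf hXZY inf_le_left)
      (by rw [hadjXY, hadjYZ])
  have e2 : X ⊓ Z = Y ⊓ Z :=
    Submodule.eq_of_le_of_finrank_le (le_inf hXZY inf_le_right)
      (by rw [hadjXZ, hadjYZ])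
  exact h (e1.symm.trans e2)

/-- In the symplectic dual polar graph over a finite field of odd order, the diamond is not
an induced subgraph: if `X, Y, Z` are pairwise adjacent generators (maximal totally isotropic
subspaces, pairwise intersections of codimension 1) and `W` is a generator adjacent to both
`Y` and `Z`, then `dim (X ⊓ W) ≥ n - 1`, so `X` and `W` cannot be at distance ≥ 2. -/
theorem no_induced_diamond_in_dual_polar_graph
    {F : Type*} [Field F] [Fintype F] (hodd : Odd (Fintype.card F))
    {V : Type*} [AddCommGroup V] [Module F V] [FiniteDimensional F V]
    (n : ℕ) (hdim : finrank F V = 2 * n)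
    (B : LinearMap.BilinForm F V) (halt : ∀ v : V, B v v = 0) (hnd : B.Nondegenerate)
    (X Y Z W : Submodule F V)
    (hX : B.orthogonal X = X) (hY : B.orthogonal Y = Y)
    (hZ : B.orthogonal Z = Z) (hW : B.orthogonal W = W)
    (hXY : X ≠ Y) (hXZ : X ≠ Z) (hYZ : Y ≠ Z)
    (hadjXY : finrank F ↥(X ⊓ Y) = n - 1)
    (hadjXZ : finrank F ↥(X ⊓ Z) = n - 1)
    (hadjYZ : finrank F ↥(Y ⊓ Z) = n - 1)
    (hadjYW : finrank F ↥(Y ⊓ W) = n - 1)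
    (hadjZW : finrank F ↥(Z ⊓ W) = n - 1) :
    n - 1 ≤ finrank F ↥(X ⊓ W) := by
  rcases Nat.eq_zero_or_pos n with hn0 | hn
  · simp [hn0]
  have hrefl : B.IsRefl := (LinearMap.IsAlt.isRefl halt)
  -- each generator has dimension n
  have hdgen : ∀ M : Submodule F V, B.orthogonal M = M → finrank F M = n := by
    intro M hM
    have := LinearMap.BilinForm.finrank_orthogonal hnd M
    rw [hM, hdim] at this
    have hle : finrank F M ≤ finrank F V := Submodule.finrank_le M
    rw [hdim] at hle
    omega
  have hdX := hdgen X hX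
  have hdY := hdgen Y hY
  have hdZ := hdgen Z hZ
  have hdW := hdgen W hW
  have e1 : Y ⊓ X = Y ⊓ Z :=
    aux_triangle n hn B hrefl hnd X Y Z hX hY hZ hdX hdY hdZ
      (by rw [inf_comm] at hadjXY; exact hadjXY) hadjYZ hadjXZ
  have e2 : Y ⊓ Z = Y ⊓ W :=
    aux_triangle n hn B hrefl hnd Z Y W hZ hY hW hdZ hdY hdW
      hadjYZ hadjYW hadjZW
  have hle : Y ⊓ X ≤ X ⊓ W :=
    le_inf inf_le_right (by rw [e1, e2]; exact inf_le_right)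
  calc n - 1 = finrank F ↥(Y ⊓ X) := by rw [inf_comm] at hadjXY; omega
    _ ≤ finrank F ↥(X ⊓ W) := Submodule.finrank_mono hle
end

section
/- If X, Y, Z are three pairwise adjacent maximal totally isotropic subspaces of a symplectic space (i.e. pairwise intersections have codimension 1), then X ⊆ Y + Z and Y ∩ Z ⊆ X. -/
open Module

/-- If `X, Y, Z` are three pairwise adjacent maximal totally isotropic subspaces of a
`2n`-dimensional symplectic space (pairwise intersections of codimension 1), then
`X ⊆ Y + Z` and `Y ∩ Z ⊆ X`. -/
theorem adjacent_generators_sub_sup_and_inf_le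
    {F : Type*} [Field F] {V : Type*} [AddCommGroup V] [Module F V] [FiniteDimensional F V]
    (n : ℕ) (hdim : finrank F V = 2 * n)
    (B : LinearMap.BilinForm F V) (halt : ∀ v : V, B v v = 0) (hnd : B.Nondegenerate)
    (X Y Z : Submodule F V)
    (hX : B.orthogonal X = X) (hY : B.orthogonal Y = Y) (hZ : B.orthogonal Z = Z)
    (hdX : finrank F ↥X = n) (hdY : finrank F ↥Y = n) (hdZ : finrank F ↥Z = n)
    (hadjXY : finrank F ↥(X ⊓ Y) = n - 1)
    (hadjXZ : finrank F ↥(X ⊓ Z) = n - 1)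
    (hadjYZ : finrank F ↥(Y ⊓ Z) = n - 1)
    (hXY : X ≠ Y) (hXZ : X ≠ Z) (hYZ : Y ≠ Z) :
    X ≤ Y ⊔ Z ∧ Y ⊓ Z ≤ X := by
  have hrefl : B.IsRefl := LinearMap.IsAlt.isRefl halt
  have hn : 1 ≤ n := by
    by_contra h
    apply hXY
    have hn0 : n = 0 := by omega
    rw [hn0] at hdX hdY
    rw [Submodule.finrank_eq_zero.mp hdX, Submodule.finrank_eq_zero.mp hdY]
  -- The orthogonal of W = Y ⊓ Z is Y ⊔ Z
  have hWorth : B.orthogonal (Y ⊓ Z) = Y ⊔ Z := by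
    have hle : Y ⊔ Z ≤ B.orthogonal (Y ⊓ Z) := by
      apply sup_le
      · calc Y = B.orthogonal Y := hY.symm
          _ ≤ B.orthogonal (Y ⊓ Z) := B.orthogonal_le inf_le_left
      · calc Z = B.orthogonal Z := hZ.symm
          _ ≤ B.orthogonal (Y ⊓ Z) := B.orthogonal_le inf_le_right
    have h1 : finrank F ↥(B.orthogonal (Y ⊓ Z)) = 2 * n - (n - 1) := by
      rw [B.finrank_orthogonal hnd, hdim, hadjYZ]
    have h2 : finrank F ↥(Y ⊔ Z) + finrank F ↥(Y ⊓ Z) = finrank F ↥Y + finrank F ↥Z :=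
      Submodule.finrank_sup_add_finrank_inf_eq Y Z
    symm
    apply Submodule.eq_of_le_of_finrank_le hle
    omega
  have main : X ≤ Y ⊔ Z := by
    by_cases hc : (X ⊓ Y : Submodule F V) = X ⊓ Z
    · -- then X ⊓ Y = Y ⊓ Z ≤ X, and X ≤ (Y ⊓ Z)ᗮ = Y ⊔ Z
      have h1 : X ⊓ Y ≤ Y ⊓ Z := le_inf inf_le_right (hc.le.trans inf_le_right)
      have h2 : X ⊓ Y = Y ⊓ Z := Submodule.eq_of_le_of_finrank_le h1 (by omega)
      have h3 : Y ⊓ Z ≤ X := h2.ge.trans inf_le_left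
      rw [← hWorth, ← hX]
      exact B.orthogonal_le h3
    · -- two distinct hyperplanes of X span X
      have hsub : (X ⊓ Y) ⊔ (X ⊓ Z) ≤ X := sup_le inf_le_left inf_le_left
      have hinf : finrank F ↥((X ⊓ Y) ⊓ (X ⊓ Z)) < n - 1 := by
        have hle : (X ⊓ Y) ⊓ (X ⊓ Z) ≤ X ⊓ Y := inf_le_left
        have hlt : (X ⊓ Y) ⊓ (X ⊓ Z) < X ⊓ Y := by
          rcases lt_or_eq_of_le hle with h | h
          · exact h
          · exact absurd (Submodule.eq_of_le_of_finrank_le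
              ((le_of_eq h.symm).trans inf_le_right) (by omega)) hc
        have := Submodule.finrank_lt_finrank_of_lt hlt
        omega
      have hd : finrank F ↥((X ⊓ Y) ⊔ (X ⊓ Z)) + finrank F ↥((X ⊓ Y) ⊓ (X ⊓ Z))
          = finrank F ↥(X ⊓ Y) + finrank F ↥(X ⊓ Z) :=
        Submodule.finrank_sup_add_finrank_inf_eq _ _
      have heq : (X ⊓ Y) ⊔ (X ⊓ Z) = X := by
        apply Submodule.eq_of_le_of_finrank_le hsub
        omega
      calc X = (X ⊓ Y) ⊔ (X ⊓ Z) := heq.symm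
        _ ≤ Y ⊔ Z := sup_le (inf_le_right.trans le_sup_left) (inf_le_right.trans le_sup_right)
  refine ⟨main, ?_⟩
  calc Y ⊓ Z ≤ B.orthogonal (B.orthogonal (Y ⊓ Z)) := B.le_orthogonal_orthogonal hrefl
    _ = B.orthogonal (Y ⊔ Z) := by rw [hWorth]
    _ ≤ B.orthogonal X := B.orthogonal_le main
    _ = X := hX
end
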